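/- Suppose there exist ε ≤ 1, δ ≤ 0.1, and for each τ ∈ {0,1}ⁿ and each i ∈ {1,…,n} a number p_τ^{(i)} ∈ [0,1] such that: (i) for every τ, Σ_{i : τ_i = 0} p_τ^{(i)} + Σ_{i : τ_i = 1} (1 − p_τ^{(i)}) < (n+2)/20; and (ii) for all i, j and all τ, τ' ∈ {0,1}ⁿ differing only in coordinate i, p_τ^{(j)} ≤ e^{2ε} · p_{τ'}^{(j)} + δ. Then n ≤ 30. -/

import Mathlib

/-- If there exist `ε ≤ 1`, `δ ≤ 0.1` and numbers `p τ i ∈ [0,1]` for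
`τ ∈ {0,1}ⁿ`, `i ∈ {1,…,n}` such that (i) for every `τ` the quantity
`Σ_{i : τ_i = 0} p_τ^{(i)} + Σ_{i : τ_i = 1} (1 − p_τ^{(i)})` is less than `(n+2)/20`,
and (ii) for all `i, j` and all `τ, τ'` differing only in coordinate `i`,
`p_τ^{(j)} ≤ e^{2ε} · p_{τ'}^{(j)} + δ`, then `n ≤ 30`. -/
theorem lower_bound_counting (n : ℕ) (ε δ : ℝ) (hε : ε ≤ 1) (hδ : δ ≤ 0.1)
    (p : (Fin n → Bool) → Fin n → ℝ)
    (hp0 : ∀ τ i, 0 ≤ p τ i) (hp1 : ∀ τ i, p τ i ≤ 1)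
    (herr : ∀ τ : Fin n → Bool,
      (∑ i ∈ Finset.univ.filter fun i => τ i = false, p τ i) +
        (∑ i ∈ Finset.univ.filter fun i => τ i = true, (1 - p τ i)) < ((n : ℝ) + 2) / 20)
    (hdp : ∀ (i j : Fin n) (τ τ' : Fin n → Bool),
      (∀ l, l ≠ i → τ l = τ' l) → τ i ≠ τ' i →
        p τ j ≤ Real.exp (2 * ε) * p τ' j + δ) :
    n ≤ 30 := by
  classical
  by_contra hn
  push_neg at hn
  set E := Real.exp 2 with hEdef
  have hE1 : (1:ℝ) ≤ E := Real.one_le_exp (by norm_num)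
  have hEpos : (0:ℝ) < E := lt_of_lt_of_le one_pos hE1
  have hElt : E < 7.39 := by
    have h := Real.exp_one_lt_d9
    have h2 : E = Real.exp 1 * Real.exp 1 := by
      rw [hEdef, ← Real.exp_add]; norm_num
    nlinarith [Real.exp_pos 1]
  -- key pointwise bound
  have key : ∀ (i : Fin n) (τ : Fin n → Bool), τ i = false →
      0.9 / E ≤ p τ i + (1 - p (Function.update τ i true) i) := by
    intro i τ hτ
    set τ' := Function.update τ i true with hτ'
    have h1 : p τ' i ≤ Real.exp (2 * ε) * p τ i + δ := by
      apply hdp i i τ' τ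
      · intro l hl; exact Function.update_of_ne hl true τ
      · simp [hτ', hτ]
    have h2 : Real.exp (2 * ε) ≤ E := Real.exp_le_exp.mpr (by linarith)
    have h0 := hp0 τ i
    have h0' := hp1 τ' i
    rw [div_le_iff₀ hEpos]
    nlinarith [mul_le_mul_of_nonneg_right h2 h0,
      mul_nonneg (sub_nonneg.mpr hE1) (sub_nonneg.mpr h0')]
  -- abbreviation
  set c : (Fin n → Bool) → Fin n → ℝ :=
    fun τ i => if τ i = true then 1 - p τ i else p τ i with hc
  -- per-i lower bound on the column sum
  have hsum_i : ∀ i : Fin n,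
      ((2:ℝ)^n / 2) * (0.9 / E) ≤ ∑ τ : Fin n → Bool, c τ i := by
    intro i
    set A := Finset.univ.filter fun τ : Fin n → Bool => τ i = false with hA
    set B := Finset.univ.filter fun τ : Fin n → Bool => τ i = true with hB
    have hsplit : ∑ τ : Fin n → Bool, c τ i
        = (∑ τ ∈ A, p τ i) + ∑ τ ∈ B, (1 - p τ i) := by
      rw [← Finset.sum_filter_add_sum_filter_not Finset.univ
        (fun τ : Fin n → Bool => τ i = false) (fun τ => c τ i)]
      congr 1
      · apply Finset.sum_congr rfl
        intro τ hτ
        simp only [Finset.mem_filter] at hτ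
        simp [hc, hτ.2]
      · have : Finset.univ.filter (fun τ : Fin n → Bool => ¬ τ i = false) = B := by
          apply Finset.filter_congr
          intro τ _
          simp
        rw [this]
        apply Finset.sum_congr rfl
        intro τ hτ
        simp only [hB, Finset.mem_filter] at hτ
        simp [hc, hτ.2]
    have hbij : ∑ τ ∈ B, (1 - p τ i)
        = ∑ σ ∈ A, (1 - p (Function.update σ i true) i) := by
      apply Finset.sum_nbij' (fun τ => Function.update τ i false)
        (fun σ => Function.update σ i true)
      · intro a ha; simp [hA]
      · intro a ha; simp [hB]
      · intro a ha
        simp only [hB, Finset.mem_filter] at ha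
        rw [Function.update_idem, ← ha.2, Function.update_eq_self]
      · intro a ha
        simp only [hA, Finset.mem_filter] at ha
        rw [Function.update_idem, ← ha.2, Function.update_eq_self]
      · intro a ha
        simp only [hB, Finset.mem_filter] at ha
        rw [Function.update_idem, ← ha.2, Function.update_eq_self]
    have hcard : (A.card : ℝ) = (2:ℝ)^n / 2 := by
      have hAB : A.card = B.card := by
        apply Finset.card_nbij' (fun σ => Function.update σ i true)
          (fun τ => Function.update τ i false)
        · intro a ha; simp [hB]
        · intro a ha; simp [hA]
        · intro a ha
          simp only [hA, Finset.mem_coe, Finset.mem_filter] at ha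
          dsimp only
          rw [Function.update_idem, ← ha.2, Function.update_eq_self]
        · intro a ha
          simp only [hB, Finset.mem_coe, Finset.mem_filter] at ha
          dsimp only
          rw [Function.update_idem, ← ha.2, Function.update_eq_self]
      have htot : A.card + B.card = 2^n := by
        rw [hA, hB]
        have := Finset.card_filter_add_card_filter_not
          (s := (Finset.univ : Finset (Fin n → Bool)))
          (p := fun τ : Fin n → Bool => τ i = false)
        have huniv : (Finset.univ : Finset (Fin n → Bool)).card = 2^n := by
          simp [Fintype.card_fun]
        rw [huniv] at this
        rw [← this]
        congr 1
        apply congrArg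
        apply Finset.filter_congr
        intro τ _
        simp
      have : (2:ℕ) * A.card = 2^n := by omega
      have := congrArg (fun k : ℕ => (k : ℝ)) this
      push_cast at this
      linarith
    rw [hsplit, hbij, ← Finset.sum_add_distrib]
    have : ∑ σ ∈ A, (0.9 / E) ≤ ∑ σ ∈ A, (p σ i + (1 - p (Function.update σ i true) i)) := by
      apply Finset.sum_le_sum
      intro σ hσ
      simp only [hA, Finset.mem_filter] at hσ
      exact key i σ hσ.2
    rw [Finset.sum_const, nsmul_eq_mul, hcard] at this
    exact this
  -- upper bound on the total sum
  have hrow : ∀ τ : Fin n → Bool, ∑ i, c τ i < ((n:ℝ) + 2) / 20 := by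
    intro τ
    have hsplit : ∑ i, c τ i
        = (∑ i ∈ Finset.univ.filter fun i => τ i = false, p τ i) +
          (∑ i ∈ Finset.univ.filter fun i => τ i = true, (1 - p τ i)) := by
      rw [← Finset.sum_filter_add_sum_filter_not Finset.univ
        (fun i : Fin n => τ i = false) (fun i => c τ i)]
      congr 1
      · apply Finset.sum_congr rfl
        intro i hi
        simp only [Finset.mem_filter] at hi
        simp [hc, hi.2]
      · have : Finset.univ.filter (fun i : Fin n => ¬ τ i = false)
            = Finset.univ.filter (fun i : Fin n => τ i = true) := by
          apply Finset.filter_congr; intro i _; simp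
        rw [this]
        apply Finset.sum_congr rfl
        intro i hi
        simp only [Finset.mem_filter] at hi
        simp [hc, hi.2]
    rw [hsplit]
    exact herr τ
  have hub : ∑ τ : Fin n → Bool, ∑ i, c τ i < (2:ℝ)^n * (((n:ℝ) + 2) / 20) := by
    have hne : (Finset.univ : Finset (Fin n → Bool)).Nonempty := Finset.univ_nonempty
    calc ∑ τ : Fin n → Bool, ∑ i, c τ i
        < ∑ _τ : Fin n → Bool, (((n:ℝ) + 2) / 20) :=
          Finset.sum_lt_sum_of_nonempty hne (fun τ _ => hrow τ)
      _ = (2:ℝ)^n * (((n:ℝ) + 2) / 20) := by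
          rw [Finset.sum_const, nsmul_eq_mul]
          congr 1
          simp [Fintype.card_fun]
  have hlb : (n:ℝ) * (((2:ℝ)^n / 2) * (0.9 / E)) ≤ ∑ τ : Fin n → Bool, ∑ i, c τ i := by
    rw [Finset.sum_comm]
    calc (n:ℝ) * (((2:ℝ)^n / 2) * (0.9 / E))
        = ∑ _i : Fin n, (((2:ℝ)^n / 2) * (0.9 / E)) := by
          rw [Finset.sum_const, nsmul_eq_mul]; simp
      _ ≤ ∑ i : Fin n, ∑ τ : Fin n → Bool, c τ i :=
          Finset.sum_le_sum (fun i _ => hsum_i i)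
  have hfinal := lt_of_le_of_lt hlb hub
  have hP : (0:ℝ) < (2:ℝ)^n := by positivity
  have hnr : (31:ℝ) ≤ (n:ℝ) := by exact_mod_cast hn
  have hEinv : (0.9:ℝ) / 7.39 < 0.9 / E := by
    apply div_lt_div_of_pos_left (by norm_num) hEpos hElt
  nlinarith [mul_pos hP (mul_pos (show (0:ℝ) < (n:ℝ) by linarith) (show (0:ℝ) < (0.9:ℝ)/E - 0.9/7.39 by linarith))]
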